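/- arXiv:1811.06190 — 4 statements merged into one kernel-verified Lean document; each statement's English description precedes it below -/
import Mathlib

section
/- Let A be a ring, let M be an A-module whose underlying additive group is torsion-free, let D ⊆ M be an A-submodule, and let c be a positive integer with c·M ⊆ D. Assume that α(D) = D for every A-module automorphism α of M. Then the restriction map φ : Aut_A(M) → Aut_A(D), α ↦ α|_D, is an injective group homomorphism whose image is exactly the stabiliser {γ ∈ Aut_A(D) : γ(c·M) = c·M} of the subgroup c·M = {c·m : m ∈ M} ⊆ D. -/
/-- Let `M` be a module over a ring `A` with torsion-free additive group,
`D` a submodule invariant under all `A`-automorphisms of `M`, and `c > 0` with `c·M ⊆ D`.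
Then the restriction map `Aut_A(M) → Aut_A(D)` is an injective group homomorphism whose
image is exactly the stabiliser of the subgroup `c·M ⊆ D`. -/
theorem restriction_injective_range_eq_stabilizer
    {A M : Type*} [Ring A] [AddCommGroup M] [Module A M]
    (htf : ∀ (n : ℤ) (m : M), n ≠ 0 → n • m = 0 → m = 0)
    (D : Submodule A M) (c : ℕ) (hc : 0 < c)
    (hcM : ∀ m : M, (c : ℤ) • m ∈ D)
    (hinv : ∀ α : M ≃ₗ[A] M, D.map (α : M →ₗ[A] M) = D) :
    ∃ φ : (M ≃ₗ[A] M) →* (D ≃ₗ[A] D),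
      (∀ (α : M ≃ₗ[A] M) (x : D), ((φ α x : D) : M) = α (x : M)) ∧
      Function.Injective φ ∧
      Set.range φ =
        {γ : D ≃ₗ[A] D |
          (fun x : D => γ x) '' {x : D | ∃ m : M, (x : M) = (c : ℤ) • m} =
            {x : D | ∃ m : M, (x : M) = (c : ℤ) • m}} := by
  classical
  have hcz : (c : ℤ) ≠ 0 := by exact_mod_cast hc.ne'
  have hcancel : ∀ x y : M, (c : ℤ) • x = (c : ℤ) • y → x = y := by
    intro x y h
    have h0 : (c : ℤ) • (x - y) = 0 := by rw [smul_sub, h, sub_self]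
    have := htf (c : ℤ) (x - y) hcz h0
    exact sub_eq_zero.mp this
  set S : Set D := {x : D | ∃ m : M, (x : M) = (c : ℤ) • m} with hS
  -- the restriction map
  let φ0 : (M ≃ₗ[A] M) → (D ≃ₗ[A] D) := fun α =>
    (α.submoduleMap D).trans (LinearEquiv.ofEq _ _ (hinv α))
  have hφ0 : ∀ (α : M ≃ₗ[A] M) (x : D), ((φ0 α x : D) : M) = α (x : M) := by
    intro α x; rfl
  let φ : (M ≃ₗ[A] M) →* (D ≃ₗ[A] D) :=
    { toFun := φ0
      map_one' := by
        apply LinearEquiv.ext; intro x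
        exact Subtype.ext (hφ0 1 x)
      map_mul' := by
        intro α β
        apply LinearEquiv.ext; intro x
        exact Subtype.ext rfl }
  have hφ : ∀ (α : M ≃ₗ[A] M) (x : D), ((φ α x : D) : M) = α (x : M) := hφ0
  refine ⟨φ, hφ, ?_, ?_⟩
  · -- injectivity
    rw [injective_iff_map_eq_one]
    intro α hα
    apply LinearEquiv.ext; intro m
    apply hcancel
    have h1 : ((φ α ⟨(c : ℤ) • m, hcM m⟩ : D) : M) = α ((c : ℤ) • m) := hφ α _
    rw [hα] at h1
    show (c : ℤ) • α m = (c : ℤ) • m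
    rw [← map_zsmul α, ← h1]
    rfl
  · -- range
    ext γ
    constructor
    · rintro ⟨α, rfl⟩
      show (fun x : D => φ α x) '' S = S
      ext x
      constructor
      · rintro ⟨y, ⟨m, hm⟩, rfl⟩
        refine ⟨α m, ?_⟩
        rw [hφ, hm, map_zsmul]
      · rintro ⟨m, hm⟩
        refine ⟨⟨(c : ℤ) • α.symm m, hcM _⟩, ⟨α.symm m, rfl⟩, ?_⟩
        apply Subtype.ext
        rw [hφ, map_zsmul, α.apply_symm_apply, ← hm]
    · intro hγ
      have hSmem : ∀ x ∈ S, γ x ∈ S := by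
        intro x hx
        have : γ x ∈ (fun x : D => γ x) '' S := ⟨x, hx, rfl⟩
        rwa [hγ] at this
      have hSmem' : ∀ x ∈ S, γ.symm x ∈ S := by
        intro x hx
        rw [← hγ] at hx
        obtain ⟨y, hy, hxy⟩ := hx
        simp only at hxy
        rw [← hxy, γ.symm_apply_apply]
        exact hy
      -- construct lifts
      have key : ∀ (δ : D ≃ₗ[A] D), (∀ x ∈ S, δ x ∈ S) →
          ∃ f : M → M, ∀ m, ((δ ⟨(c : ℤ) • m, hcM m⟩ : D) : M) = (c : ℤ) • f m := by
        intro δ hδ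
        choose f hf using fun m : M => hδ ⟨(c : ℤ) • m, hcM m⟩ ⟨m, rfl⟩
        exact ⟨f, hf⟩
      obtain ⟨f, hf⟩ := key γ hSmem
      obtain ⟨g, hg⟩ := key γ.symm hSmem'
      have hmemEq : ∀ (x : D) (h : (x : M) ∈ D), (⟨(x : M), h⟩ : D) = x := by
        intro x h; rfl
      -- f applied to elements of D agrees with γ via cancellation later
      have hsub : ∀ (m n : M) (h : m = n) (hm : m ∈ D) (hn : n ∈ D),
          (⟨m, hm⟩ : D) = ⟨n, hn⟩ := by intro m n h hm hn; exact Subtype.ext h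
      have fadd : ∀ m n : M, f (m + n) = f m + f n := by
        intro m n
        apply hcancel
        have e1 : (⟨(c : ℤ) • (m + n), hcM (m + n)⟩ : D)
            = ⟨(c : ℤ) • m, hcM m⟩ + ⟨(c : ℤ) • n, hcM n⟩ := by
          apply Subtype.ext; simp [smul_add]
        have := hf (m + n)
        rw [e1, map_add] at this
        rw [← this, Submodule.coe_add, hf m, hf n, smul_add]
      have fsmul : ∀ (a : A) (m : M), f (a • m) = a • f m := by
        intro a m
        apply hcancel
        have e1 : (⟨(c : ℤ) • (a • m), hcM (a • m)⟩ : D)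
            = a • ⟨(c : ℤ) • m, hcM m⟩ :=
          Subtype.ext (smul_comm (c : ℤ) a m)
        have := hf (a • m)
        rw [e1, map_smul] at this
        rw [← this, SetLike.val_smul, hf m]
        exact smul_comm a (c : ℤ) (f m)
      have gadd : ∀ m n : M, g (m + n) = g m + g n := by
        intro m n
        apply hcancel
        have e1 : (⟨(c : ℤ) • (m + n), hcM (m + n)⟩ : D)
            = ⟨(c : ℤ) • m, hcM m⟩ + ⟨(c : ℤ) • n, hcM n⟩ := by
          apply Subtype.ext; simp [smul_add]
        have := hg (m + n)
        rw [e1, map_add] at this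
        rw [← this, Submodule.coe_add, hg m, hg n, smul_add]
      have gsmul : ∀ (a : A) (m : M), g (a • m) = a • g m := by
        intro a m
        apply hcancel
        have e1 : (⟨(c : ℤ) • (a • m), hcM (a • m)⟩ : D)
            = a • ⟨(c : ℤ) • m, hcM m⟩ :=
          Subtype.ext (smul_comm (c : ℤ) a m)
        have := hg (a • m)
        rw [e1, map_smul] at this
        rw [← this, SetLike.val_smul, hg m]
        exact smul_comm a (c : ℤ) (g m)
      have hgf : ∀ m : M, g (f m) = m := by
        intro m
        apply hcancel
        have e1 : (⟨(c : ℤ) • f m, hcM (f m)⟩ : D) = γ ⟨(c : ℤ) • m, hcM m⟩ :=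
          Subtype.ext (hf m).symm
        have := hg (f m)
        rw [e1, γ.symm_apply_apply] at this
        exact this.symm
      have hfg : ∀ m : M, f (g m) = m := by
        intro m
        apply hcancel
        have e1 : (⟨(c : ℤ) • g m, hcM (g m)⟩ : D) = γ.symm ⟨(c : ℤ) • m, hcM m⟩ :=
          Subtype.ext (hg m).symm
        have := hf (g m)
        rw [e1, γ.apply_symm_apply] at this
        exact this.symm
      let α : M ≃ₗ[A] M :=
        { toFun := f
          map_add' := fadd
          map_smul' := fsmul
          invFun := g
          left_inv := hgf
          right_inv := hfg }
      refine ⟨α, ?_⟩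
      apply LinearEquiv.ext; intro x
      apply Subtype.ext
      apply hcancel
      have e1 : (⟨(c : ℤ) • (x : M), hcM x⟩ : D) = (c : ℤ) • x := by
        apply Subtype.ext; rfl
      have h2 := hf (x : M)
      rw [e1, map_zsmul] at h2
      have h3 : ((φ α x : D) : M) = f (x : M) := hφ α x
      rw [h3, ← h2]
      rfl
end

section
/- Let A be a ring, let M and M̂ be A-modules whose underlying additive groups are torsion-free, let D ⊆ M and D̂ ⊆ M̂ be A-submodules, and let c be a positive integer with c·M ⊆ D and c·M̂ ⊆ D̂. Assume that every A-module isomorphism M → M̂ maps D onto D̂. Then M and M̂ are isomorphic as A-modules if and only if there exists an A-module isomorphism γ : D → D̂ with γ(c·M) = c·M̂, where c·M = {c·m : m ∈ M} ⊆ D and c·M̂ = {c·m : m ∈ M̂} ⊆ D̂. -/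
/-- Let `M`, `M̂` be `A`-modules with torsion-free additive groups,
`D ⊆ M`, `D̂ ⊆ M̂` submodules with `c·M ⊆ D`, `c·M̂ ⊆ D̂` for a positive integer `c`, and
suppose every `A`-isomorphism `M → M̂` maps `D` onto `D̂`. Then `M ≅ M̂` iff there is an
`A`-isomorphism `γ : D → D̂` with `γ(c·M) = c·M̂`. -/
theorem isomorphic_iff_exists_submodule_iso_mapping_cM
    {A M Mh : Type*} [Ring A] [AddCommGroup M] [Module A M]
    [AddCommGroup Mh] [Module A Mh]
    (htfM : ∀ (n : ℤ) (m : M), n ≠ 0 → n • m = 0 → m = 0)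
    (htfMh : ∀ (n : ℤ) (m : Mh), n ≠ 0 → n • m = 0 → m = 0)
    (D : Submodule A M) (Dh : Submodule A Mh) (c : ℕ) (hc : 0 < c)
    (hcM : ∀ m : M, (c : ℤ) • m ∈ D) (hcMh : ∀ m : Mh, (c : ℤ) • m ∈ Dh)
    (hinv : ∀ e : M ≃ₗ[A] Mh, D.map (e : M →ₗ[A] Mh) = Dh) :
    Nonempty (M ≃ₗ[A] Mh) ↔
      ∃ γ : D ≃ₗ[A] Dh,
        (fun x : D => ((γ x : Dh) : Mh)) '' {x : D | ∃ m : M, (x : M) = (c : ℤ) • m} =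
          {y : Mh | ∃ m : Mh, y = (c : ℤ) • m} := by
  have hcne : (c : ℤ) ≠ 0 := by exact_mod_cast hc.ne'
  have cancelM : ∀ a b : M, (c : ℤ) • a = (c : ℤ) • b → a = b := by
    intro a b h
    have := htfM (c : ℤ) (a - b) hcne (by rw [smul_sub, h, sub_self])
    exact sub_eq_zero.mp this
  have cancelMh : ∀ a b : Mh, (c : ℤ) • a = (c : ℤ) • b → a = b := by
    intro a b h
    have := htfMh (c : ℤ) (a - b) hcne (by rw [smul_sub, h, sub_self])
    exact sub_eq_zero.mp this
  constructor
  · rintro ⟨e⟩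
    refine ⟨(e.submoduleMap D).trans (LinearEquiv.ofEq _ _ (hinv e)), ?_⟩
    ext y
    constructor
    · rintro ⟨x, ⟨m, hm⟩, rfl⟩
      refine ⟨e m, ?_⟩
      show e (x : M) = (c : ℤ) • e m
      rw [hm, map_zsmul]
    · rintro ⟨m', hm'⟩
      refine ⟨⟨(c : ℤ) • e.symm m', hcM _⟩, ⟨e.symm m', rfl⟩, ?_⟩
      show e ((c : ℤ) • e.symm m') = y
      rw [map_zsmul, e.apply_symm_apply, hm']
  · rintro ⟨γ, hγ⟩
    have hex : ∀ m : M, ∃ m' : Mh, ((γ ⟨(c : ℤ) • m, hcM m⟩ : Dh) : Mh) = (c : ℤ) • m' := by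
      intro m
      have : ((γ ⟨(c : ℤ) • m, hcM m⟩ : Dh) : Mh) ∈ {y : Mh | ∃ m : Mh, y = (c : ℤ) • m} := by
        rw [← hγ]
        exact ⟨⟨(c : ℤ) • m, hcM m⟩, ⟨m, rfl⟩, rfl⟩
      exact this
    choose f hf using hex
    have key : ∀ m : M, (c : ℤ) • f m = ((γ ⟨(c : ℤ) • m, hcM m⟩ : Dh) : Mh) :=
      fun m => (hf m).symm
    have fadd : ∀ a b : M, f (a + b) = f a + f b := by
      intro a b
      apply cancelMh
      rw [smul_add, key, key, key]
      have : (⟨(c : ℤ) • (a + b), hcM (a + b)⟩ : D) =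
          ⟨(c : ℤ) • a, hcM a⟩ + ⟨(c : ℤ) • b, hcM b⟩ := by
        ext; simp [smul_add]
      rw [this, map_add]
      rfl
    have fsmul : ∀ (r : A) (a : M), f (r • a) = r • f a := by
      intro r a
      apply cancelMh
      rw [key]
      have : (⟨(c : ℤ) • (r • a), hcM (r • a)⟩ : D) = r • ⟨(c : ℤ) • a, hcM a⟩ := by
        ext
        exact smul_comm (c : ℤ) r a
      rw [this, map_smul]
      have : ((r • γ ⟨(c : ℤ) • a, hcM a⟩ : Dh) : Mh) = r • ((γ ⟨(c : ℤ) • a, hcM a⟩ : Dh) : Mh) :=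
        rfl
      rw [this, ← key, smul_comm]
    let L : M →ₗ[A] Mh := { toFun := f, map_add' := fadd, map_smul' := fsmul }
    have hinj : Function.Injective L := by
      intro a b hab
      apply cancelM
      have h1 : (c : ℤ) • f a = (c : ℤ) • f b := by rw [show f a = f b from hab]
      rw [key, key] at h1
      have h2 : γ ⟨(c : ℤ) • a, hcM a⟩ = γ ⟨(c : ℤ) • b, hcM b⟩ := Subtype.ext h1
      have h3 := γ.injective h2
      exact congrArg Subtype.val h3
    have hsurj : Function.Surjective L := by
      intro y
      have : (c : ℤ) • y ∈ {y : Mh | ∃ m : Mh, y = (c : ℤ) • m} := ⟨y, rfl⟩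
      rw [← hγ] at this
      obtain ⟨x, ⟨m, hm⟩, hx⟩ := this
      refine ⟨m, ?_⟩
      apply cancelMh
      show (c : ℤ) • f m = (c : ℤ) • y
      rw [key]
      have : (⟨(c : ℤ) • m, hcM m⟩ : D) = x := Subtype.ext hm.symm
      rw [this]
      exact hx
    exact ⟨LinearEquiv.ofBijective L ⟨hinj, hsurj⟩⟩
end

section
/- Let K be a number field with ring of integers 𝓞_K, let O ⊆ 𝓞_K be a subring whose additive group has finite index in the additive group of 𝓞_K, let V be a K-vector space, and let M be a finitely generated additive subgroup of V with a·m ∈ M for all a ∈ O and m ∈ M. Then among the additive subgroups N of M that satisfy a·n ∈ N for all a ∈ 𝓞_K, n ∈ N, and that have finite index in M, there is a greatest one: there exists such a subgroup L ⊆ M of finite index, stable under 𝓞_K, which contains every 𝓞_K-stable subgroup of finite index in M. -/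
open NumberField

/-- Let `K` be a number field with ring of integers `𝓞 K`, `O ⊆ 𝓞 K` an
order (a subring of finite additive index), `V` a `K`-vector space and `M ⊆ V` a finitely
generated additive subgroup stable under `O`. Then among the `𝓞 K`-stable subgroups of
finite index in `M` there is a greatest one. -/
theorem exists_greatest_maximalOrder_stable_subgroup
    (K : Type*) [Field K] [NumberField K]
    (O : Subring (𝓞 K)) (hO : O.toAddSubgroup.index ≠ 0)
    (V : Type*) [AddCommGroup V] [Module K V]
    (M : AddSubgroup V) (hMfg : M.FG)
    (hMO : ∀ a ∈ O, ∀ m ∈ M, (algebraMap (𝓞 K) K a) • m ∈ M) :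
    ∃ L : AddSubgroup V, L ≤ M ∧
      (∀ (a : 𝓞 K), ∀ x ∈ L, (algebraMap (𝓞 K) K a) • x ∈ L) ∧
      L.relIndex M ≠ 0 ∧
      ∀ N : AddSubgroup V, N ≤ M →
        (∀ (a : 𝓞 K), ∀ x ∈ N, (algebraMap (𝓞 K) K a) • x ∈ N) →
        N.relIndex M ≠ 0 → N ≤ L := by
  classical
  set n := O.toAddSubgroup.index with hn
  -- The candidate: all elements of `M` whose full `𝓞 K`-orbit stays in `M`.
  set L : AddSubgroup V :=
    { carrier := {x | x ∈ M ∧ ∀ a : 𝓞 K, (algebraMap (𝓞 K) K a) • x ∈ M}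
      zero_mem' := ⟨M.zero_mem, fun a => by simpa using M.zero_mem⟩
      add_mem' := fun hx hy => ⟨M.add_mem hx.1 hy.1, fun a => by
        rw [smul_add]; exact M.add_mem (hx.2 a) (hy.2 a)⟩
      neg_mem' := fun hx => ⟨M.neg_mem hx.1, fun a => by
        rw [smul_neg]; exact M.neg_mem (hx.2 a)⟩ } with hL
  have hLM : L ≤ M := fun x hx => hx.1
  have hLstab : ∀ (a : 𝓞 K), ∀ x ∈ L, (algebraMap (𝓞 K) K a) • x ∈ L := by
    intro a x hx
    refine ⟨hx.2 a, fun b => ?_⟩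
    rw [smul_smul, ← map_mul]
    exact hx.2 (b * a)
  -- `n • m ∈ L` for every `m ∈ M`, since `n • a ∈ O` for every `a : 𝓞 K`.
  have hnO : ∀ a : 𝓞 K, n • a ∈ O := by
    haveI : O.toAddSubgroup.FiniteIndex := ⟨hO⟩
    intro a
    exact O.toAddSubgroup.nsmul_index_mem a
  have hnML : ∀ m ∈ M, (n : ℕ) • m ∈ L := by
    intro m hm
    refine ⟨M.nsmul_mem hm n, fun a => ?_⟩
    have : (algebraMap (𝓞 K) K a) • ((n : ℕ) • m)
        = (algebraMap (𝓞 K) K (n • a)) • m := by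
      rw [map_nsmul, smul_comm, smul_assoc]
    rw [this]
    exact hMO _ (hnO a) m hm
  -- Finite index: the quotient `M ⧸ L'` is a finitely generated `n`-torsion group.
  have hLrel : L.relIndex M ≠ 0 := by
    set L' := L.addSubgroupOf M with hL'
    haveI : AddGroup.FG M := by
      rw [AddGroup.fg_iff_addSubgroup_fg]
      exact hMfg
    haveI : AddGroup.FG (M ⧸ L') :=
      AddGroup.fg_of_surjective (QuotientAddGroup.mk'_surjective L')
    have htors : AddMonoid.IsTorsion (M ⧸ L') := by
      intro x
      obtain ⟨m, rfl⟩ := QuotientAddGroup.mk'_surjective L' x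
      refine isOfFinAddOrder_iff_nsmul_eq_zero.2 ⟨n, Nat.pos_of_ne_zero hO, ?_⟩
      rw [← map_nsmul, QuotientAddGroup.mk'_apply, QuotientAddGroup.eq_zero_iff]
      exact hnML (m : V) m.2
    haveI : Finite (M ⧸ L') := AddCommGroup.finite_of_fg_torsion _ htors
    exact AddSubgroup.index_ne_zero_of_finite
  refine ⟨L, hLM, hLstab, hLrel, ?_⟩
  intro N hNM hNstab _ x hx
  exact ⟨hNM hx, fun a => hNM (hNstab a x hx)⟩
end

section
/- Let 𝓞 be the ring of integers of a number field and let Q be a finitely generated 𝓞-module whose torsion submodule T(Q) is finite of cardinality t; let Q̂ = Q/T(Q) and let r be the rank of Q̂, i.e. r = rank_ℤ(Q)/rank_ℤ(𝓞). Let v be a positive integer. If Q̂ has exactly u 𝓞-submodules that are free 𝓞-modules of index v, then Q has exactly u·t^r 𝓞-submodules that are free 𝓞-modules of index v·t. -/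
open NumberField

section AuxLemmas

open Submodule


open Submodule

section Aux
variable {R : Type*} [CommRing R] [IsDomain R]
variable {Q : Type*} [AddCommGroup Q] [Module R Q]

theorem aux_free_inf_torsion (F : Submodule R Q) (hF : Module.Free R ↥F) :
    F ⊓ Submodule.torsion R Q = ⊥ := by
  rw [eq_bot_iff]
  rintro x ⟨hxF, a, hax⟩
  have h0 : (a : R) • (⟨x, hxF⟩ : F) = 0 := Subtype.ext (by simpa using (show (a : R) • x = 0 from hax))
  have := (smul_eq_zero.mp h0).resolve_left (nonZeroDivisors.coe_ne_zero a)
  simpa using congrArg Subtype.val this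

theorem aux_index_eq (F : Submodule R Q) (hdisj : F ⊓ Submodule.torsion R Q = ⊥) :
    F.toAddSubgroup.index
      = (F.map (Submodule.torsion R Q).mkQ).toAddSubgroup.index
        * Nat.card (Submodule.torsion R Q) := by
  set T := Submodule.torsion R Q
  set π := T.mkQ
  have hker : (π : Q →+ Q ⧸ T).ker = T.toAddSubgroup := by
    ext x
    simp only [AddMonoidHom.mem_ker, LinearMap.toAddMonoidHom_coe, Submodule.mem_toAddSubgroup]
    exact (Submodule.Quotient.mk_eq_zero T)
  have hrange : (π : Q →+ Q ⧸ T).range = ⊤ :=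
    AddMonoidHom.range_eq_top.mpr T.mkQ_surjective
  rw [Submodule.map_toAddSubgroup, AddSubgroup.index_map, hker, hrange,
    AddSubgroup.index_top, mul_one, ← Submodule.sup_toAddSubgroup]
  rw [← AddSubgroup.relIndex_mul_index
    (H := F.toAddSubgroup) (K := (F ⊔ T).toAddSubgroup)
    (fun x hx => (Submodule.mem_toAddSubgroup _).mpr
      (le_sup_left (a := F) (b := T) hx)), mul_comm]
  congr 1
  have hinf : F.toAddSubgroup ⊓ T.toAddSubgroup = ⊥ := by
    ext x
    simp only [AddSubgroup.mem_inf, Submodule.mem_toAddSubgroup, AddSubgroup.mem_bot]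
    constructor
    · rintro ⟨h1, h2⟩
      simpa using (eq_bot_iff.mp hdisj) (Submodule.mem_inf.mpr ⟨h1, h2⟩)
    · rintro rfl; simp
  rw [Submodule.sup_toAddSubgroup, AddSubgroup.relIndex_sup_left,
    ← AddSubgroup.inf_relIndex_right, hinf, AddSubgroup.relIndex_bot_left]
  rfl
end Aux


open Submodule NumberField

theorem aux_basis {K : Type*} [Field K] [NumberField K]
    {Q : Type*} [AddCommGroup Q] [Module (𝓞 K) Q] [Module.Finite (𝓞 K) Q]
    (r : ℕ)
    (hr : Module.finrank ℤ (Q ⧸ Submodule.torsion (𝓞 K) Q) = r * Module.finrank ℤ (𝓞 K))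
    (v : ℕ) (hv : 0 < v)
    (Fh : Submodule (𝓞 K) (Q ⧸ Submodule.torsion (𝓞 K) Q))
    (hfree : Module.Free (𝓞 K) ↥Fh) (hidx : Fh.toAddSubgroup.index = v) :
    Nonempty (Module.Basis (Fin r) (𝓞 K) ↥Fh) := by
  classical
  haveI := hfree
  haveI : Module.Finite (𝓞 K) (Q ⧸ Submodule.torsion (𝓞 K) Q) := Module.Finite.of_surjective (Submodule.torsion (𝓞 K) Q).mkQ (Submodule.torsion (𝓞 K) Q).mkQ_surjective
  haveI : IsNoetherian (𝓞 K) (Q ⧸ Submodule.torsion (𝓞 K) Q) := isNoetherian_of_isNoetherianRing_of_finite _ _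
  haveI : Module.Finite (𝓞 K) ↥Fh := Module.Finite.iff_fg.mpr (IsNoetherian.noetherian Fh)
  haveI : Module.Finite ℤ (Q ⧸ Submodule.torsion (𝓞 K) Q) := Module.Finite.trans (𝓞 K) (Q ⧸ Submodule.torsion (𝓞 K) Q)
  haveI : Module.Finite ℤ ↥Fh := Module.Finite.trans (𝓞 K) ↥Fh
  -- the two bases
  let ι := Module.Free.ChooseBasisIndex (𝓞 K) ↥Fh
  let b : Module.Basis ι (𝓞 K) ↥Fh := Module.Free.chooseBasis _ _
  let κ := Module.Free.ChooseBasisIndex ℤ (𝓞 K)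
  let c : Module.Basis κ ℤ (𝓞 K) := Module.Free.chooseBasis _ _
  have hd : 0 < Module.finrank ℤ (𝓞 K) := by
    rw [RingOfIntegers.rank]
    exact Module.finrank_pos
  -- finrank of Fh over ℤ
  have h1 : Module.finrank ℤ ↥Fh = Module.finrank ℤ (𝓞 K) * Fintype.card ι := by
    rw [Module.finrank_eq_card_basis (c.smulTower b), Fintype.card_prod,
      Module.finrank_eq_card_basis c]
  -- v • x ∈ Fh
  have hsmul : ∀ x : Q ⧸ Submodule.torsion (𝓞 K) Q, (v : ℤ) • x ∈ Fh := by
    intro x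
    have h0 : v • ((x : (Q ⧸ Submodule.torsion (𝓞 K) Q) ⧸ Fh.toAddSubgroup)) = 0 := by
      rw [← hidx]
      exact card_nsmul_eq_zero'
    have : ((v • x : Q ⧸ Submodule.torsion (𝓞 K) Q) : (Q ⧸ Submodule.torsion (𝓞 K) Q) ⧸ Fh.toAddSubgroup) = 0 := by
      rw [← h0]; rfl
    have := (QuotientAddGroup.eq_zero_iff _).mp this
    simpa using this
  have hle1 : Module.finrank ℤ ↥Fh ≤ Module.finrank ℤ (Q ⧸ Submodule.torsion (𝓞 K) Q) :=
    LinearMap.finrank_le_finrank_of_injective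
      (f := (Fh.subtype).restrictScalars ℤ) Subtype.val_injective
  let g : (Q ⧸ Submodule.torsion (𝓞 K) Q) →ₗ[ℤ] ↥Fh :=
    { toFun := fun x => ⟨(v : ℤ) • x, hsmul x⟩
      map_add' := fun x y => Subtype.ext (smul_add ((v : ℤ)) x y)
      map_smul' := fun m x => Subtype.ext (smul_comm ((v : ℤ)) m x) }
  have hginj : Function.Injective g := by
    intro x y hxy
    have h' : (v : ℤ) • x = (v : ℤ) • y := congrArg Subtype.val hxy
    have h'' : ((v : ℤ) : 𝓞 K) • x = ((v : ℤ) : 𝓞 K) • y := by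
      rw [Int.cast_smul_eq_zsmul, Int.cast_smul_eq_zsmul]; exact h'
    have hvne : ((v : ℤ) : 𝓞 K) ≠ 0 := by
      simp only [Int.cast_natCast, ne_eq, Nat.cast_eq_zero]
      exact hv.ne'
    exact smul_right_injective _ hvne h''
  have hle2 : Module.finrank ℤ (Q ⧸ Submodule.torsion (𝓞 K) Q) ≤ Module.finrank ℤ ↥Fh :=
    LinearMap.finrank_le_finrank_of_injective hginj
  have heq : Module.finrank ℤ ↥Fh = Module.finrank ℤ (Q ⧸ Submodule.torsion (𝓞 K) Q) := le_antisymm hle1 hle2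
  have hcard : Fintype.card ι = r := by
    have := h1.symm.trans (heq.trans hr)
    rw [mul_comm r _] at this
    exact Nat.eq_of_mul_eq_mul_left hd this
  exact ⟨b.reindex (Fintype.equivFinOfCardEq hcard)⟩

theorem aux_fiber {K : Type*} [Field K] [NumberField K]
    {Q : Type*} [AddCommGroup Q] [Module (𝓞 K) Q] [Module.Finite (𝓞 K) Q]
    (t : ℕ) [Finite ↥(Submodule.torsion (𝓞 K) Q)]
    (ht : Nat.card ↥(Submodule.torsion (𝓞 K) Q) = t)
    (r : ℕ)
    (hr : Module.finrank ℤ (Q ⧸ Submodule.torsion (𝓞 K) Q) = r * Module.finrank ℤ (𝓞 K))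
    (v : ℕ) (hv : 0 < v)
    (Fh : Submodule (𝓞 K) (Q ⧸ Submodule.torsion (𝓞 K) Q))
    (hfree : Module.Free (𝓞 K) ↥Fh) (hidx : Fh.toAddSubgroup.index = v) :
    Nonempty ({F : Submodule (𝓞 K) Q //
        (Module.Free (𝓞 K) ↥F ∧ F.toAddSubgroup.index = v * t) ∧
          F.map (Submodule.torsion (𝓞 K) Q).mkQ = Fh}
      ≃ (Fin r → ↥(Submodule.torsion (𝓞 K) Q))) := by
  classical
  haveI := hfree
  obtain ⟨bas⟩ := aux_basis r hr v hv Fh hfree hidx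
  -- the type of sections
  have hinj : ∀ s : {s : ↥Fh →ₗ[𝓞 K] Q //
      (Submodule.torsion (𝓞 K) Q).mkQ ∘ₗ s = Fh.subtype}, Function.Injective ⇑s.1 := by
    intro s
    have h : Function.Injective
        (⇑(Submodule.torsion (𝓞 K) Q).mkQ ∘ ⇑s.1) := by
      rw [← LinearMap.coe_comp, s.2]
      exact Subtype.val_injective
    exact Function.Injective.of_comp h
  have hmap : ∀ s : {s : ↥Fh →ₗ[𝓞 K] Q //
      (Submodule.torsion (𝓞 K) Q).mkQ ∘ₗ s = Fh.subtype},
      (LinearMap.range s.1).map (Submodule.torsion (𝓞 K) Q).mkQ = Fh := by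
    intro s
    rw [← LinearMap.range_comp, s.2, Submodule.range_subtype]
  have hfreeL : ∀ s : {s : ↥Fh →ₗ[𝓞 K] Q //
      (Submodule.torsion (𝓞 K) Q).mkQ ∘ₗ s = Fh.subtype},
      Module.Free (𝓞 K) ↥(LinearMap.range s.1) := fun s =>
    Module.Free.of_equiv (LinearEquiv.ofInjective s.1 (hinj s))
  have hidxL : ∀ s : {s : ↥Fh →ₗ[𝓞 K] Q //
      (Submodule.torsion (𝓞 K) Q).mkQ ∘ₗ s = Fh.subtype},
      (LinearMap.range s.1).toAddSubgroup.index = v * t := by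
    intro s
    rw [aux_index_eq _ (aux_free_inf_torsion _ (hfreeL s)), hmap s, hidx, ht]
  set toLift : {s : ↥Fh →ₗ[𝓞 K] Q //
      (Submodule.torsion (𝓞 K) Q).mkQ ∘ₗ s = Fh.subtype} →
      {F : Submodule (𝓞 K) Q //
        (Module.Free (𝓞 K) ↥F ∧ F.toAddSubgroup.index = v * t) ∧
          F.map (Submodule.torsion (𝓞 K) Q).mkQ = Fh} :=
    fun s => ⟨LinearMap.range s.1, ⟨hfreeL s, hidxL s⟩, hmap s⟩ with htoLift
  have hinj1 : Function.Injective toLift := by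
    intro s₁ s₂ h
    have hrg : LinearMap.range s₁.1 = LinearMap.range s₂.1 := by
      have := congrArg Subtype.val h
      simpa [htoLift] using this
    apply Subtype.ext
    apply LinearMap.ext
    intro x
    have hmem : s₁.1 x ∈ LinearMap.range s₂.1 := hrg ▸ LinearMap.mem_range_self _ x
    obtain ⟨y, hy⟩ := hmem
    have h1 : (Submodule.torsion (𝓞 K) Q).mkQ (s₁.1 x) = (x : Q ⧸ Submodule.torsion (𝓞 K) Q) := by
      have := LinearMap.ext_iff.mp s₁.2 x
      simpa using this
    have h2 : (Submodule.torsion (𝓞 K) Q).mkQ (s₂.1 y) = (y : Q ⧸ Submodule.torsion (𝓞 K) Q) := by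
      have := LinearMap.ext_iff.mp s₂.2 y
      simpa using this
    have hyx : y = x := by
      apply Subtype.ext
      rw [← h1, ← h2, hy]
    rw [← hy, hyx]
  have hsurj1 : Function.Surjective toLift := by
    rintro ⟨F, ⟨hF, hFidx⟩, hFmap⟩
    have hdisj := aux_free_inf_torsion F hF
    have hqmem : ∀ x : ↥F, (Submodule.torsion (𝓞 K) Q).mkQ ↑x ∈ Fh := fun x =>
      hFmap ▸ Submodule.mem_map_of_mem x.2
    set φ : ↥F →ₗ[𝓞 K] ↥Fh :=
      LinearMap.codRestrict Fh ((Submodule.torsion (𝓞 K) Q).mkQ ∘ₗ F.subtype) hqmem with hφ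
    have hφinj : Function.Injective φ := by
      rw [← LinearMap.ker_eq_bot]
      rw [eq_bot_iff]
      intro x hx
      have h0 : (Submodule.torsion (𝓞 K) Q).mkQ ↑x = 0 := by
        have := congrArg Subtype.val (LinearMap.mem_ker.mp hx)
        exact this
      have hxT : (x : Q) ∈ Submodule.torsion (𝓞 K) Q := by
        rwa [Submodule.mkQ_apply, Submodule.Quotient.mk_eq_zero] at h0
      have hbot : (x : Q) ∈ F ⊓ Submodule.torsion (𝓞 K) Q := ⟨x.2, hxT⟩
      rw [hdisj] at hbot
      have : (x : Q) = 0 := hbot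
      simpa [Submodule.mem_bot] using Subtype.ext this
    have hφsurj : Function.Surjective φ := by
      rintro ⟨y, hy⟩
      rw [← hFmap] at hy
      obtain ⟨x, hxF, hx⟩ := hy
      exact ⟨⟨x, hxF⟩, Subtype.ext hx⟩
    let e : ↥F ≃ₗ[𝓞 K] ↥Fh := LinearEquiv.ofBijective φ ⟨hφinj, hφsurj⟩
    have hs : (Submodule.torsion (𝓞 K) Q).mkQ ∘ₗ (F.subtype ∘ₗ (e.symm : ↥Fh →ₗ[𝓞 K] ↥F))
        = Fh.subtype := by
      apply LinearMap.ext
      intro y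
      have h1 : φ (e.symm y) = y := e.apply_symm_apply y
      have := congrArg Subtype.val h1
      exact this
    have hrange : LinearMap.range (F.subtype ∘ₗ (e.symm : ↥Fh →ₗ[𝓞 K] ↥F)) = F := by
      rw [LinearMap.range_comp, LinearEquiv.range, Submodule.map_top, Submodule.range_subtype]
    exact ⟨⟨F.subtype ∘ₗ (e.symm : ↥Fh →ₗ[𝓞 K] ↥F), hs⟩, Subtype.ext hrange⟩
  obtain ⟨s₀, hs₀⟩ := Module.projective_lifting_property (Submodule.torsion (𝓞 K) Q).mkQ
    Fh.subtype (Submodule.torsion (𝓞 K) Q).mkQ_surjective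
  have hmem2 : ∀ (s : {s : ↥Fh →ₗ[𝓞 K] Q //
      (Submodule.torsion (𝓞 K) Q).mkQ ∘ₗ s = Fh.subtype}) (x : ↥Fh),
      (s.1 - s₀) x ∈ Submodule.torsion (𝓞 K) Q := by
    intro s x
    rw [← Submodule.Quotient.mk_eq_zero (Submodule.torsion (𝓞 K) Q), ← Submodule.mkQ_apply]
    have h1 := LinearMap.ext_iff.mp s.2 x
    have h2 := LinearMap.ext_iff.mp hs₀ x
    simp only [LinearMap.coe_comp, Function.comp_apply, Submodule.mkQ_apply] at h1 h2
    simp [LinearMap.sub_apply, h1, h2]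
  let e2 : {s : ↥Fh →ₗ[𝓞 K] Q //
      (Submodule.torsion (𝓞 K) Q).mkQ ∘ₗ s = Fh.subtype}
      ≃ (↥Fh →ₗ[𝓞 K] ↥(Submodule.torsion (𝓞 K) Q)) :=
    { toFun := fun s => LinearMap.codRestrict (Submodule.torsion (𝓞 K) Q) (s.1 - s₀) (hmem2 s)
      invFun := fun g => ⟨s₀ + (Submodule.torsion (𝓞 K) Q).subtype ∘ₗ g, by
        apply LinearMap.ext
        intro x
        have h2 := LinearMap.ext_iff.mp hs₀ x
        simp only [LinearMap.coe_comp, Function.comp_apply] at h2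
        have h3 : (Submodule.torsion (𝓞 K) Q).mkQ ((g x : Q)) = 0 := by
          rw [Submodule.mkQ_apply, Submodule.Quotient.mk_eq_zero]
          exact (g x).2
        simp only [Submodule.mkQ_apply] at h2 h3
        simp [LinearMap.add_apply, h2, h3]⟩
      left_inv := fun s => by
        apply Subtype.ext
        apply LinearMap.ext
        intro x
        simp
      right_inv := fun g => by
        apply LinearMap.ext
        intro x
        apply Subtype.ext
        simp }
  exact ⟨(Equiv.ofBijective toLift ⟨hinj1, hsurj1⟩).symm.trans
    (e2.trans (bas.constr ℕ).toEquiv.symm)⟩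


open Submodule NumberField

theorem aux_map_free {R : Type*} [CommRing R] [IsDomain R]
    {Q : Type*} [AddCommGroup Q] [Module R Q]
    (F : Submodule R Q) (hdisj : F ⊓ Submodule.torsion R Q = ⊥)
    (hF : Module.Free R ↥F) :
    Module.Free R ↥(F.map (Submodule.torsion R Q).mkQ) := by
  haveI := hF
  set π := (Submodule.torsion R Q).mkQ with hπ
  have hqmem : ∀ x : ↥F, π ↑x ∈ F.map π := fun x => Submodule.mem_map_of_mem x.2
  set φ : ↥F →ₗ[R] ↥(F.map π) := LinearMap.codRestrict _ (π ∘ₗ F.subtype) hqmem with hφ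
  have hφinj : Function.Injective φ := by
    rw [← LinearMap.ker_eq_bot, eq_bot_iff]
    intro x hx
    have h0 : π ↑x = 0 := by
      have := congrArg Subtype.val (LinearMap.mem_ker.mp hx)
      exact this
    have hxT : (x : Q) ∈ Submodule.torsion R Q := by
      rwa [hπ, Submodule.mkQ_apply, Submodule.Quotient.mk_eq_zero] at h0
    have hbot : (x : Q) ∈ F ⊓ Submodule.torsion R Q := ⟨x.2, hxT⟩
    rw [hdisj] at hbot
    simpa [Submodule.mem_bot] using Subtype.ext (show (x : Q) = 0 from hbot)
  have hφsurj : Function.Surjective φ := by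
    rintro ⟨y, hy⟩
    obtain ⟨x, hxF, hx⟩ := hy
    exact ⟨⟨x, hxF⟩, Subtype.ext hx⟩
  exact Module.Free.of_equiv (LinearEquiv.ofBijective φ ⟨hφinj, hφsurj⟩)

end AuxLemmas

/-- Let `𝓞` be the ring of integers of a number field and `Q` a finitely
generated `𝓞`-module with finite torsion submodule of cardinality `t`; set
`Q̂ = Q/T(Q)` and let `r = rank_ℤ(Q̂)/rank_ℤ(𝓞)`. If `Q̂` has exactly `u` free
`𝓞`-submodules of index `v`, then `Q` has exactly `u·t^r` free `𝓞`-submodules of index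
`v·t`. -/
theorem count_free_submodules_of_index
    {K : Type*} [Field K] [NumberField K]
    {Q : Type*} [AddCommGroup Q] [Module (𝓞 K) Q] [Module.Finite (𝓞 K) Q]
    (t : ℕ) [Finite ↥(Submodule.torsion (𝓞 K) Q)]
    (ht : Nat.card ↥(Submodule.torsion (𝓞 K) Q) = t)
    (r : ℕ)
    (hr : Module.finrank ℤ (Q ⧸ Submodule.torsion (𝓞 K) Q) = r * Module.finrank ℤ (𝓞 K))
    (v : ℕ) (hv : 0 < v) (u : ℕ)
    (hu : Nat.card {F : Submodule (𝓞 K) (Q ⧸ Submodule.torsion (𝓞 K) Q) //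
        Module.Free (𝓞 K) ↥F ∧ F.toAddSubgroup.index = v} = u) :
    Nat.card {F : Submodule (𝓞 K) Q //
        Module.Free (𝓞 K) ↥F ∧ F.toAddSubgroup.index = v * t} = u * t ^ r := by
  classical
  have ht0 : 0 < t := ht ▸ Nat.card_pos
  set π := (Submodule.torsion (𝓞 K) Q).mkQ with hπ
  have hidxmap : ∀ F : Submodule (𝓞 K) Q, Module.Free (𝓞 K) ↥F →
      F.toAddSubgroup.index = v * t → (F.map π).toAddSubgroup.index = v := by
    intro F hF hFidx
    have := (aux_index_eq F (aux_free_inf_torsion F hF)).symm.trans hFidx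
    rw [ht] at this
    exact Nat.eq_of_mul_eq_mul_right ht0 this
  set Φ : {F : Submodule (𝓞 K) Q //
        Module.Free (𝓞 K) ↥F ∧ F.toAddSubgroup.index = v * t} →
      {F : Submodule (𝓞 K) (Q ⧸ Submodule.torsion (𝓞 K) Q) //
        Module.Free (𝓞 K) ↥F ∧ F.toAddSubgroup.index = v} :=
    fun F => ⟨F.1.map π,
      aux_map_free F.1 (aux_free_inf_torsion F.1 F.2.1) F.2.1,
      hidxmap F.1 F.2.1 F.2.2⟩ with hΦ
  have hfib : ∀ b : {F : Submodule (𝓞 K) (Q ⧸ Submodule.torsion (𝓞 K) Q) //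
        Module.Free (𝓞 K) ↥F ∧ F.toAddSubgroup.index = v},
      Nonempty ({F // Φ F = b} ≃ (Fin r → ↥(Submodule.torsion (𝓞 K) Q))) := by
    intro b
    obtain ⟨e⟩ := aux_fiber t ht r hr v hv b.1 b.2.1 b.2.2
    refine ⟨Equiv.trans ?_ e⟩
    exact
      { toFun := fun F => ⟨F.1.1, F.1.2, by
          have := congrArg Subtype.val F.2
          simpa [hΦ] using this⟩
        invFun := fun F => ⟨⟨F.1, F.2.1⟩, Subtype.ext F.2.2⟩
        left_inv := fun F => by
          apply Subtype.ext
          apply Subtype.ext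
          rfl
        right_inv := fun F => by
          apply Subtype.ext
          rfl }
  have E := (Equiv.sigmaFiberEquiv Φ).symm.trans
    ((Equiv.sigmaCongrRight (fun b => (hfib b).some)).trans (Equiv.sigmaEquivProd _ _))
  rw [Nat.card_congr E, Nat.card_prod, hu, Nat.card_fun, ht, Nat.card_eq_fintype_card,
    Fintype.card_fin]
end
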